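/- Let G be a subgroup of a finite group H, let X be a finite G-set, and let g ∈ G. Then the fixed-point set (ind_G^H X)^{⟨g⟩} of g acting on the induced H-set, together with its C_H(g)-action, is C_H(g)-equivariantly isomorphic to the disjoint union, over conjugacy classes [g'] of G with g' conjugate to g in H, of the induced sets ind_{C_G(g')}^{C_H(g')} (X^{⟨g'⟩}). -/

import Mathlib

open MulAction

/-- The number of orbits of a group action. -/
noncomputable def numOrbits (G : Type*) [Group G] (X : Type*) [MulAction G X] : ℕ :=
  Nat.card (Quotient (orbitRel G X))

/-- `(1/|G|) · Σ_{(g₀,…,g_k) pairwise commuting} |X^{⟨g₀,…,g_k⟩}|`. -/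
noncomputable def chiT (k : ℕ) (G : Type*) [Group G] (X : Type*) [MulAction G X] : ℚ :=
  (Nat.card {p : (Fin (k + 1) → G) × X //
      (∀ i j, Commute (p.1 i) (p.1 j)) ∧ ∀ i, p.1 i • p.2 = p.2} : ℚ) / (Nat.card G : ℚ)

/-- The higher order Euler characteristic: `χ⁰(X,G) = |X/G|`, and for `k ≥ 1` it is given by
the commuting-tuples formula. -/
noncomputable def chi (k : ℕ) (G : Type*) [Group G] (X : Type*) [MulAction G X] : ℚ :=
  match k with
  | 0 => (numOrbits G X : ℚ)
  | _ + 1 => chiT k G X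

/-- The centralizer of `g` acts on the fixed-point set of `g`. -/
instance fixAction (G : Type*) [Group G] (X : Type*) [MulAction G X] (g : G) :
    MulAction (Subgroup.centralizer ({g} : Set G)) {x : X // g • x = x} where
  smul c x := ⟨(c : G) • (x : X), by
    have h : g * (c : G) = (c : G) • g :=
      Subgroup.mem_centralizer_iff.mp c.2 g (Set.mem_singleton g)
    rw [← mul_smul, h, smul_eq_mul, mul_smul, x.2]⟩
  one_smul x := Subtype.ext (one_smul G x.1)
  mul_smul a b x := Subtype.ext (mul_smul (a : G) (b : G) x.1)

/-- The recursively defined higher order Euler characteristic: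
`χ⁰(X,G) = |X/G|`, `χᵏ(X,G) = Σ_{[g]} χ^{k-1}(X^{⟨g⟩}, C_G(g))`. -/
noncomputable def chiRec : (k : ℕ) → (G : Type) → [inst : Group G] → (X : Type) →
    [inst2 : MulAction G X] → ℚ :=
  Nat.rec (motive := fun _ => (G : Type) → [inst : Group G] → (X : Type) →
      [inst2 : MulAction G X] → ℚ)
    (fun G _ X _ => (numOrbits G X : ℚ))
    (fun _k ih G _ X _ => ∑ᶠ c : ConjClasses G,
        ih (Subgroup.centralizer ({Quotient.out c} : Set G))
          {x : X // Quotient.out c • x = x})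
section Ind
variable {K H : Type*} [Group K] [Group H]

/-- The equivalence relation on `H × X` defining the induced `H`-set of a `K`-set `X`
along a homomorphism `f : K →* H`:
`(h₁,x₁) ∼ (h₂,x₂)` iff `∃ g, h₂ = h₁ (f g)⁻¹` and `x₂ = g • x₁`. -/
def indSetoid (f : K →* H) (X : Type*) [MulAction K X] : Setoid (H × X) where
  r p q := ∃ g : K, q.1 = p.1 * (f g)⁻¹ ∧ q.2 = g • p.2
  iseqv := by
    constructor
    · exact fun p => ⟨1, by simp⟩
    · rintro p q ⟨g, h1, h2⟩
      exact ⟨g⁻¹, by simp [h1, mul_assoc], by simp [h2]⟩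
    · rintro p q r ⟨g, h1, h2⟩ ⟨g', h1', h2'⟩
      exact ⟨g' * g, by simp [h1, h1', mul_assoc], by simp [h2, h2', mul_smul]⟩

/-- The induced `H`-set `ind_K^H X = (H × X)/∼`. -/
def Ind (f : K →* H) (X : Type*) [MulAction K X] : Type _ := Quotient (indSetoid f X)

/-- `H` acts on the induced set by left multiplication on the first coordinate. -/
instance Ind.mulAction (f : K →* H) (X : Type*) [MulAction K X] :
    MulAction H (Ind f X) where
  smul h := Quotient.map (fun p => (h * p.1, p.2))
    (by rintro p q ⟨g, h1, h2⟩; exact ⟨g, by simp [h1, mul_assoc], h2⟩)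
  one_smul x := by
    refine Quotient.inductionOn x (fun p => ?_)
    show Quotient.map _ _ _ = _
    simp
  mul_smul a b x := by
    refine Quotient.inductionOn x (fun p => ?_)
    show Quotient.map _ _ _ = Quotient.map _ _ (Quotient.map _ _ _)
    simp [mul_assoc]

end Ind
section Centralizers

/-- The inclusion `C_G(g) →* C_H(g)` for a subgroup `G ≤ H` and `g ∈ G`. -/
def centInc {H : Type*} [Group H] (G : Subgroup H) (g : G) :
    Subgroup.centralizer ({g} : Set G) →* Subgroup.centralizer ({(g : H)} : Set H) where
  toFun k := ⟨((k : G) : H), by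
    rw [Subgroup.mem_centralizer_iff]
    rintro m hm
    rw [Set.mem_singleton_iff] at hm
    subst hm
    have h := Subgroup.mem_centralizer_iff.mp k.2 g (Set.mem_singleton g)
    have h' : g * (k : G) = (k : G) * g := by simpa [smul_eq_mul] using h
    exact_mod_cast congrArg (fun x : G => (x : H)) h'⟩
  map_one' := rfl
  map_mul' a b := rfl

/-- Conjugation by `a` carries the centralizer of `g` to the centralizer of `a⁻¹ga`. -/
def conjElem {H : Type*} [Group H] {g b a : H} (ha : a⁻¹ * g * a = b)
    (k : Subgroup.centralizer ({g} : Set H)) : Subgroup.centralizer ({b} : Set H) :=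
  ⟨a⁻¹ * (k : H) * a, by
    subst ha
    rw [Subgroup.mem_centralizer_iff]
    rintro m hm
    rw [Set.mem_singleton_iff] at hm
    subst hm
    have hk : g * (k : H) = (k : H) * g := by
      simpa [smul_eq_mul] using Subgroup.mem_centralizer_iff.mp k.2 g (Set.mem_singleton g)
    have h2 : g * ((k : H) * a) = (k : H) * (g * a) := by rw [← mul_assoc, hk, mul_assoc]
    simp [mul_assoc, h2]⟩

end Centralizers
section MainProof

variable {H : Type} [Group H] {G : Subgroup H} {X : Type} [MulAction G X]

private lemma mk_out_conj (c : ConjClasses G) : ConjClasses.mk (Quotient.out c) = c := by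
  rw [← ConjClasses.quotient_mk_eq_mk]; exact Quotient.out_eq c

/-- commuting of a centralizer element with the center element -/
private lemma cent_comm {b : H} (n : Subgroup.centralizer ({b} : Set H)) :
    b * (n : H) = (n : H) * b :=
  Subgroup.mem_centralizer_iff.mp n.2 b rfl

variable (g : H)
variable (h : {c : ConjClasses G // IsConj g ((Quotient.out c : G) : H)} → H)
variable (hh : ∀ c : {c : ConjClasses G // IsConj g ((Quotient.out c : G) : H)},
      (h c)⁻¹ * g * (h c) = ((Quotient.out c.1 : G) : H))

/-- The inverse comparison map. -/
noncomputable def Phi (w : Σ c : {c : ConjClasses G // IsConj g ((Quotient.out c : G) : H)},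
      Ind (centInc G (Quotient.out c.1)) {x : X // (Quotient.out c.1 : G) • x = x}) :
    {y : Ind G.subtype X // g • y = y} := by
  refine ⟨Quotient.lift
    (fun p => (Quotient.mk (indSetoid G.subtype X) (h w.1 * (p.1 : H), (p.2 : X)) :
      Ind G.subtype X)) ?_ w.2, ?_⟩
  · rintro ⟨n, x⟩ ⟨n', x'⟩ ⟨m, hm1, hm2⟩
    refine Quotient.sound ⟨m, ?_, ?_⟩
    · have : (n' : H) = (n : H) * ((m : G) : H)⁻¹ := by
        have := congrArg (fun t => ((t : Subgroup.centralizer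
          ({((Quotient.out w.1.1 : G) : H)} : Set H)) : H)) hm1
        simpa [centInc] using this
      simp only [this, Subgroup.coe_subtype, mul_assoc]
    · have : (x' : X) = (m : G) • (x : X) := congrArg Subtype.val hm2
      simpa using this
  · obtain ⟨c, z⟩ := w
    refine Quotient.inductionOn z (fun p => ?_)
    refine Quotient.sound ⟨Quotient.out c.1, ?_, ?_⟩
    · show h c * (p.1 : H) = g * (h c * (p.1 : H)) * (G.subtype (Quotient.out c.1))⁻¹
      have h1 : g * h c = h c * ((Quotient.out c.1 : G) : H) := by
        have := hh c
        rw [← this]; group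
      have h2 := cent_comm (b := ((Quotient.out c.1 : G) : H)) p.1
      have key : g * (h c * (p.1 : H)) =
          (h c * (p.1 : H)) * ((Quotient.out c.1 : G) : H) := by
        calc g * (h c * (p.1 : H)) = (g * h c) * (p.1 : H) := by rw [mul_assoc]
          _ = h c * (((Quotient.out c.1 : G) : H) * (p.1 : H)) := by rw [h1, mul_assoc]
          _ = h c * ((p.1 : H) * ((Quotient.out c.1 : G) : H)) := by rw [h2]
          _ = (h c * (p.1 : H)) * ((Quotient.out c.1 : G) : H) := by rw [mul_assoc]
      simp only [Subgroup.coe_subtype]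
      rw [key]; group
    · exact p.2.2.symm

end MainProof

section MainProof2

variable {H : Type} [Group H] {G : Subgroup H} {X : Type} [MulAction G X]
variable {g : H}
variable {h : {c : ConjClasses G // IsConj g ((Quotient.out c : G) : H)} → H}
variable (hh : ∀ c : {c : ConjClasses G // IsConj g ((Quotient.out c : G) : H)},
      (h c)⁻¹ * g * (h c) = ((Quotient.out c.1 : G) : H))

private lemma conjMulAux {g a b : H} (ha : a⁻¹ * g * a = b)
    (n : Subgroup.centralizer ({b} : Set H)) :
    (a * (n : H))⁻¹ * g * (a * (n : H)) = b := by
  have h2 := cent_comm n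
  have h3 : (a * (n : H))⁻¹ * g * (a * (n : H)) = (n : H)⁻¹ * (a⁻¹ * g * a) * (n : H) := by
    group
  rw [h3, ha, mul_assoc, h2, ← mul_assoc]
  group

private lemma Phi_equiv (k : Subgroup.centralizer ({g} : Set H))
    (c : {c : ConjClasses G // IsConj g ((Quotient.out c : G) : H)})
    (z : Ind (centInc G (Quotient.out c.1)) {x : X // (Quotient.out c.1 : G) • x = x}) :
    Phi g h hh ⟨c, conjElem (hh c) k • z⟩ = k • Phi g h hh ⟨c, z⟩ := by
  refine Quotient.inductionOn z (fun p => ?_)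
  apply Subtype.ext
  show Quotient.mk (indSetoid G.subtype X)
      (h c * ((conjElem (hh c) k * p.1 : Subgroup.centralizer
        ({((Quotient.out c.1 : G) : H)} : Set H)) : H), (p.2 : X)) =
    Quotient.mk (indSetoid G.subtype X) ((k : H) * (h c * (p.1 : H)), (p.2 : X))
  refine congrArg (Quotient.mk (indSetoid G.subtype X)) (Prod.ext ?_ rfl)
  show h c * (((h c)⁻¹ * (k : H) * h c) * (p.1 : H)) = (k : H) * (h c * (p.1 : H))
  group

private lemma Phi_inj : Function.Injective (Phi (X := X) g h hh) := by
  rintro ⟨c, z⟩ ⟨c', z'⟩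
  refine Quotient.inductionOn₂ z z' ?_
  intro p p' hEq
  have h0 : (Quotient.mk (indSetoid G.subtype X) (h c * (p.1 : H), (p.2 : X)) :
      Ind G.subtype X) = Quotient.mk (indSetoid G.subtype X) (h c' * (p'.1 : H), (p'.2 : X)) :=
    congrArg Subtype.val hEq
  obtain ⟨m, hm1, hm2⟩ := Quotient.exact h0
  simp only [Subgroup.coe_subtype] at hm1 hm2
  have hc : (h c * (p.1 : H))⁻¹ * g * (h c * (p.1 : H)) = ((Quotient.out c.1 : G) : H) :=
    conjMulAux (hh c) p.1
  have hc' : (h c' * (p'.1 : H))⁻¹ * g * (h c' * (p'.1 : H)) = ((Quotient.out c'.1 : G) : H) :=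
    conjMulAux (hh c') p'.1
  have hkey : ((Quotient.out c'.1 : G) : H) = ((m * Quotient.out c.1 * m⁻¹ : G) : H) := by
    rw [← hc', hm1]
    push_cast
    conv_rhs => rw [← hc]
    group
  have hkeyG : Quotient.out c'.1 = m * Quotient.out c.1 * m⁻¹ :=
    Subtype.coe_injective hkey
  have hconj : IsConj (Quotient.out c.1) (Quotient.out c'.1) :=
    isConj_iff.mpr ⟨m, hkeyG.symm⟩
  have hcc : c = c' := Subtype.ext <|
    (mk_out_conj c.1).symm.trans
      ((ConjClasses.mk_eq_mk_iff_isConj.mpr hconj).trans (mk_out_conj c'.1))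
  subst hcc
  have hmem : m ∈ Subgroup.centralizer ({Quotient.out c.1} : Set G) := by
    rw [Subgroup.mem_centralizer_iff]
    rintro y hy
    rw [Set.mem_singleton_iff] at hy
    subst hy
    have : Quotient.out c.1 = m * Quotient.out c.1 * m⁻¹ := hkeyG
    calc Quotient.out c.1 * m = (m * Quotient.out c.1 * m⁻¹) * m := by rw [← this]
      _ = m * Quotient.out c.1 := by group
  have hz : (Quotient.mk (indSetoid (centInc G (Quotient.out c.1))
        {x : X // (Quotient.out c.1 : G) • x = x}) p) = Quotient.mk _ p' := by
    refine Quotient.sound ⟨⟨m, hmem⟩, ?_, ?_⟩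
    · apply Subtype.ext
      show (p'.1 : H) = (p.1 : H) * ((m : G) : H)⁻¹
      exact mul_left_cancel (hm1.trans (mul_assoc _ _ _))
    · exact Subtype.ext hm2
  rw [hz]

end MainProof2

section MainProof3

variable {H : Type} [Group H] {G : Subgroup H} {X : Type} [MulAction G X]
variable {g : H}
variable {h : {c : ConjClasses G // IsConj g ((Quotient.out c : G) : H)} → H}
variable (hh : ∀ c : {c : ConjClasses G // IsConj g ((Quotient.out c : G) : H)},
      (h c)⁻¹ * g * (h c) = ((Quotient.out c.1 : G) : H))

private lemma Phi_surj : Function.Surjective (Phi (X := X) g h hh) := by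
  intro y
  have h1 : Quotient.mk (indSetoid G.subtype X) (Quotient.out y.1) = y.1 := Quotient.out_eq _
  set p : H × X := Quotient.out y.1 with hpdef
  have h2 : (Quotient.mk (indSetoid G.subtype X) (g * p.1, p.2) : Ind G.subtype X) =
      Quotient.mk (indSetoid G.subtype X) p := by
    have := y.2
    rw [← h1] at this
    exact this
  obtain ⟨k, hk1, hk2⟩ := Quotient.exact h2
  simp only [Subgroup.coe_subtype] at hk1 hk2
  have e1 : p.1 * ((k : G) : H) = g * p.1 := by
    conv_lhs => rw [hk1]
    group
  have hkH : ((k : G) : H) = p.1⁻¹ * g * p.1 := by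
    rw [mul_assoc, ← e1]; group
  set c₀ : ConjClasses G := ConjClasses.mk k with hc₀
  have hconjG : IsConj (Quotient.out c₀) k :=
    ConjClasses.mk_eq_mk_iff_isConj.mp (mk_out_conj c₀)
  obtain ⟨u, hu⟩ := isConj_iff.mp hconjG
  set a : G := u⁻¹ with hadef
  have haG : a⁻¹ * Quotient.out c₀ * a = k := by
    rw [hadef, inv_inv, ← hu]
  have haH : ((a : G) : H)⁻¹ * ((Quotient.out c₀ : G) : H) * ((a : G) : H) = ((k : G) : H) := by
    exact_mod_cast congrArg (fun t : G => (t : H)) haG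
  have hIdx : IsConj g ((Quotient.out c₀ : G) : H) := by
    refine IsConj.trans (b := ((k : G) : H)) ?_ ?_
    · refine isConj_iff.mpr ⟨p.1⁻¹, ?_⟩
      rw [inv_inv, hkH]
    · refine isConj_iff.mpr ⟨((a : G) : H), ?_⟩
      rw [← haH]; group
  set cI : {c : ConjClasses G // IsConj g ((Quotient.out c : G) : H)} := ⟨c₀, hIdx⟩ with hcI
  set nH : H := (h cI)⁻¹ * p.1 * ((a : G) : H)⁻¹ with hnH
  have h5 : ((Quotient.out c₀ : G) : H) =
      ((a : G) : H) * (p.1⁻¹ * g * p.1) * ((a : G) : H)⁻¹ := by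
    rw [← hkH, ← haH]; group
  have e3 : nH * ((Quotient.out c₀ : G) : H) = (h cI)⁻¹ * g * p.1 * ((a : G) : H)⁻¹ := by
    rw [hnH, h5]; group
  have e4 : ((Quotient.out c₀ : G) : H) * nH = (h cI)⁻¹ * g * p.1 * ((a : G) : H)⁻¹ := by
    have h6 := hh cI
    rw [hnH]
    conv_lhs => rw [← h6]
    group
  have hnmem : nH ∈ Subgroup.centralizer ({((Quotient.out c₀ : G) : H)} : Set H) := by
    rw [Subgroup.mem_centralizer_iff]
    rintro y hy
    rw [Set.mem_singleton_iff] at hy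
    subst hy
    rw [e4, e3]
  have hak : (Quotient.out c₀) * a = a * k := by
    rw [← haG]; group
  have xfix : (Quotient.out c₀ : G) • (a • p.2) = a • p.2 := by
    rw [← mul_smul, hak, mul_smul, ← hk2]
  refine ⟨⟨cI, Quotient.mk (indSetoid (centInc G (Quotient.out c₀))
      {x : X // (Quotient.out c₀ : G) • x = x}) (⟨nH, hnmem⟩, ⟨a • p.2, xfix⟩)⟩, ?_⟩
  apply Subtype.ext
  show Quotient.mk (indSetoid G.subtype X) (h cI * nH, a • p.2) = y.1
  rw [← h1]
  refine Quotient.sound ⟨a⁻¹, ?_, ?_⟩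
  · show p.1 = (h cI * nH) * (G.subtype a⁻¹)⁻¹
    simp only [Subgroup.coe_subtype, hnH]
    push_cast
    group
  · show p.2 = a⁻¹ • (a • p.2)
    rw [← mul_smul, inv_mul_cancel, one_smul]

end MainProof3

theorem fixed_points_of_induced_decompose
    (H : Type) [Group H] [Finite H] (G : Subgroup H) (X : Type) [MulAction G X] [Finite X]
    (g : H) (hg : g ∈ G)
    (h : {c : ConjClasses G // IsConj g ((Quotient.out c : G) : H)} → H)
    (hh : ∀ c : {c : ConjClasses G // IsConj g ((Quotient.out c : G) : H)},
      (h c)⁻¹ * g * (h c) = ((Quotient.out c.1 : G) : H)) :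
    ∃ e : {y : Ind G.subtype X // g • y = y} ≃
        Σ c : {c : ConjClasses G // IsConj g ((Quotient.out c : G) : H)},
          Ind (centInc G (Quotient.out c.1)) {x : X // (Quotient.out c.1 : G) • x = x},
      ∀ (k : Subgroup.centralizer ({g} : Set H)) (y : {y : Ind G.subtype X // g • y = y}),
        e (k • y) = ⟨(e y).1, conjElem (hh (e y).1) k • (e y).2⟩ := by
  classical
  set Ψ := Equiv.ofBijective (Phi (X := X) g h hh) ⟨Phi_inj hh, Phi_surj hh⟩ with hΨ
  refine ⟨Ψ.symm, ?_⟩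
  intro k y
  apply Ψ.injective
  rw [Equiv.apply_symm_apply]
  have h1 : Ψ ⟨(Ψ.symm y).1, conjElem (hh (Ψ.symm y).1) k • (Ψ.symm y).2⟩
      = k • Ψ ⟨(Ψ.symm y).1, (Ψ.symm y).2⟩ := Phi_equiv hh k _ _
  rw [h1, Sigma.eta, Equiv.apply_symm_apply]
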